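/- In a locally finitely presentable category, pure monomorphisms are stable under pushouts: if f : A → B is a pure monomorphism and g : A → C any morphism, then the pushout of f along g is a pure monomorphism. -/

import Mathlib

universe v u

open CategoryTheory Limits Opposite

/-- A small category `J` is `κ`-filtered if every diagram in `J` of size `< κ`
admits a cocone. -/
def IsKappaFiltered (J : Type v) [SmallCategory J] (κ : Cardinal.{v}) : Prop :=
  ∀ (K : Type v) (_ : SmallCategory K), Cardinal.mk (Σ (a : K) (b : K), a ⟶ b) < κ →
    ∀ F : K ⥤ J, Nonempty (Cocone F)

/-- An object `X` is `κ`-presentable if its hom-functor preserves `κ`-filtered colimits. -/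
def KPresentable {C : Type u} [Category.{v} C] (κ : Cardinal.{v}) (X : C) : Prop :=
  ∀ (J : Type v) (_ : SmallCategory J), IsKappaFiltered J κ →
    Nonempty (PreservesColimitsOfShape J (coyoneda.obj (op X)))

/-- An object `X` is `κ`-generated if its hom-functor preserves `κ`-filtered colimits
of diagrams of monomorphisms. -/
def KGenerated {C : Type u} [Category.{v} C] (κ : Cardinal.{v}) (X : C) : Prop :=
  ∀ (J : Type v) (_ : SmallCategory J), IsKappaFiltered J κ →
    ∀ F : J ⥤ C, (∀ {i j : J} (f : i ⟶ j), Mono (F.map f)) →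
      Nonempty (PreservesColimit F (coyoneda.obj (op X)))

/-- `C` is locally `κ`-presentable. -/
def LocallyPresentable (C : Type u) [Category.{v} C] (κ : Cardinal.{v}) : Prop :=
  Cardinal.IsRegular κ ∧ HasColimits C ∧ ∃ S : Set C,
    Small.{v} S ∧ (∀ X ∈ S, KPresentable κ X) ∧
    ∀ A : C, ∃ (J : Type v) (_ : SmallCategory J) (_ : IsKappaFiltered J κ) (F : J ⥤ C)
      (c : Cocone F), Nonempty (IsColimit c) ∧ c.pt = A ∧ ∀ j, F.obj j ∈ S

/-- `K` is injective with respect to the morphism `n`. -/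
def InjWrt {C : Type u} [Category.{v} C] {X Y : C} (n : X ⟶ Y) (K : C) : Prop :=
  ∀ u : X ⟶ K, ∃ w : Y ⟶ K, n ≫ w = u

/-- `f : A ⟶ B` is a `κ`-pure morphism. -/
def KPure {C : Type u} [Category.{v} C] (κ : Cardinal.{v}) {A B : C} (f : A ⟶ B) : Prop :=
  ∀ ⦃P Q : C⦄ (z : P ⟶ Q) (u : P ⟶ A) (v : Q ⟶ B), KPresentable κ P → KPresentable κ Q →
    u ≫ f = z ≫ v → ∃ d : Q ⟶ A, z ≫ d = u

lemma isFiltered_of_isKappaFiltered {J : Type v} [SmallCategory J]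
    (hJ : IsKappaFiltered J Cardinal.aleph0) : IsFiltered J := by
  apply IsFiltered.of_cocone_nonempty.{v}
  intro K _ _ F
  refine hJ K _ ?_ F
  exact Cardinal.mk_lt_aleph0_iff.mpr inferInstance

lemma isKappaFiltered_of_isFiltered {J : Type v} [SmallCategory J] [IsFiltered J] :
    IsKappaFiltered J Cardinal.aleph0 := by
  intro K _ hK F
  have hfin : Finite (Σ (a : K) (b : K), a ⟶ b) := Cardinal.mk_lt_aleph0_iff.mp hK
  have hobj : Finite K := Finite.of_injective
    (fun a => (⟨a, a, 𝟙 a⟩ : Σ (a : K) (b : K), a ⟶ b)) (fun a b hab => congrArg Sigma.fst hab)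
  have hhom : ∀ a b : K, Finite (a ⟶ b) := fun a b => Finite.of_injective
    (fun f => (⟨a, b, f⟩ : Σ (a : K) (b : K), a ⟶ b))
    (fun f g hfg => by
      have := sigma_mk_injective hfg
      exact sigma_mk_injective this)
  haveI : FinCategory K :=
    { fintypeObj := Fintype.ofFinite K
      fintypeHom := fun a b => Fintype.ofFinite _ }
  exact IsFiltered.cocone_nonempty F

section Aux

variable {C : Type u} [Category.{v} C]

lemma factor_of_presentable {J : Type v} [SmallCategory J]
    (hJ : IsKappaFiltered J Cardinal.aleph0)
    {F : J ⥤ C} {c : Cocone F} (hc : IsColimit c) {X : C}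
    (hX : KPresentable Cardinal.aleph0 X) (v : X ⟶ c.pt) :
    ∃ (j : J) (w : X ⟶ F.obj j), w ≫ c.ι.app j = v := by
  obtain ⟨hpres⟩ := hX J _ hJ
  have hc' := isColimitOfPreserves (coyoneda.obj (op X)) hc
  obtain ⟨j, y, hy⟩ := Types.jointly_surjective _ hc' v
  exact ⟨j, y, hy⟩

lemma equalize_of_presentable {J : Type v} [SmallCategory J] [IsFiltered J]
    (hJ : IsKappaFiltered J Cardinal.aleph0)
    {F : J ⥤ C} {c : Cocone F} (hc : IsColimit c) {X : C}
    (hX : KPresentable Cardinal.aleph0 X) {j : J} (p q : X ⟶ F.obj j)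
    (hpq : p ≫ c.ι.app j = q ≫ c.ι.app j) :
    ∃ (k : J) (m : j ⟶ k), p ≫ F.map m = q ≫ F.map m := by
  obtain ⟨hpres⟩ := hX J _ hJ
  have hc' := isColimitOfPreserves (coyoneda.obj (op X)) hc
  have hpq' : ((coyoneda.obj (op X)).mapCocone c).ι.app j p
      = ((coyoneda.obj (op X)).mapCocone c).ι.app j q := hpq
  obtain ⟨k, s, t, hst⟩ := (Types.FilteredColimit.isColimit_eq_iff _ hc').mp hpq'
  refine ⟨IsFiltered.coeq s t, s ≫ IsFiltered.coeqHom s t, ?_⟩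
  have hst' : p ≫ F.map s = q ≫ F.map t := hst
  rw [F.map_comp, ← Category.assoc, hst', Category.assoc, ← F.map_comp,
    ← IsFiltered.coeq_condition, F.map_comp]

end Aux

section DCat

open CategoryTheory Limits Opposite

variable {C : Type u} [Category.{v} C] {I J : Type v} [SmallCategory I] [SmallCategory J]

/-- Index for approximating a pushout by pushouts of presentable stages. -/
structure DObj (FA : I ⥤ C) (FB : J ⥤ C) (cA : Cocone FA) (cB : Cocone FB)
    (f : @Quiver.Hom C CategoryStruct.toQuiver cA.pt cB.pt) : Type v where
  i : I
  j : J
  t : @Quiver.Hom C CategoryStruct.toQuiver (FA.obj i) (FB.obj j)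
  ht : t ≫ cB.ι.app j = cA.ι.app i ≫ f

variable {FA : I ⥤ C} {FB : J ⥤ C} {cA : Cocone FA} {cB : Cocone FB} {f : cA.pt ⟶ cB.pt}

@[ext]
structure DHom (d d' : DObj FA FB cA cB f) : Type v where
  φ : d.i ⟶ d'.i
  ψ : d.j ⟶ d'.j
  w : FA.map φ ≫ d'.t = d.t ≫ FB.map ψ

instance : SmallCategory (DObj FA FB cA cB f) where
  Hom := DHom
  id d := ⟨𝟙 _, 𝟙 _, by simp⟩
  comp {d₁ d₂ d₃} m n := ⟨m.φ ≫ n.φ, m.ψ ≫ n.ψ, by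
    rw [FA.map_comp, FB.map_comp, Category.assoc, n.w, ← Category.assoc, m.w, Category.assoc]⟩
  id_comp m := by apply DHom.ext <;> simp
  comp_id m := by apply DHom.ext <;> simp
  assoc m n o := by apply DHom.ext <;> simp

@[simp] lemma Did_φ (d : DObj FA FB cA cB f) : DHom.φ (𝟙 d) = 𝟙 d.i := rfl
@[simp] lemma Did_ψ (d : DObj FA FB cA cB f) : DHom.ψ (𝟙 d) = 𝟙 d.j := rfl
@[simp] lemma Dcomp_φ {d₁ d₂ d₃ : DObj FA FB cA cB f} (m : d₁ ⟶ d₂) (n : d₂ ⟶ d₃) :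
    DHom.φ (m ≫ n) = m.φ ≫ n.φ := rfl
@[simp] lemma Dcomp_ψ {d₁ d₂ d₃ : DObj FA FB cA cB f} (m : d₁ ⟶ d₂) (n : d₂ ⟶ d₃) :
    DHom.ψ (m ≫ n) = m.ψ ≫ n.ψ := rfl

variable (hcB : IsColimit cB) (hJκ : IsKappaFiltered J Cardinal.aleph0)
  (hpresA : ∀ i : I, KPresentable Cardinal.aleph0 (FA.obj i))

section
variable [IsFiltered J]

include hcB hJκ hpresA in
lemma exists_jt (i : I) :
    ∃ (j : J) (t : FA.obj i ⟶ FB.obj j), t ≫ cB.ι.app j = cA.ι.app i ≫ f :=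
  factor_of_presentable hJκ hcB (hpresA i) (cA.ι.app i ≫ f)

include hcB hJκ hpresA in
lemma extendD (d : DObj FA FB cA cB f) {i' : I} (φ : d.i ⟶ i') :
    ∃ (j' : J) (t' : FA.obj i' ⟶ FB.obj j')
      (_ : t' ≫ cB.ι.app j' = cA.ι.app i' ≫ f) (ψ : d.j ⟶ j'),
      FA.map φ ≫ t' = d.t ≫ FB.map ψ := by
  obtain ⟨j₁, t₁, ht₁⟩ := exists_jt hcB hJκ hpresA i'
  set l := IsFiltered.leftToMax d.j j₁
  set r := IsFiltered.rightToMax d.j j₁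
  have he : (d.t ≫ FB.map l) ≫ cB.ι.app _ = (FA.map φ ≫ t₁ ≫ FB.map r) ≫ cB.ι.app _ := by
    simp only [Category.assoc, Cocone.w]
    rw [d.ht, ht₁, ← Category.assoc, cA.w φ]
  obtain ⟨j₃, m, hm⟩ := equalize_of_presentable hJκ hcB (hpresA d.i) _ _ he
  refine ⟨j₃, t₁ ≫ FB.map (r ≫ m), ?_, l ≫ m, ?_⟩
  · rw [FB.map_comp, Category.assoc, Category.assoc, Cocone.w, Cocone.w, ht₁]
  · simp only [FB.map_comp, Category.assoc] at hm ⊢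
    exact hm.symm

include hcB hJκ hpresA in
lemma isFilteredD [IsFiltered I] [Nonempty I] : IsFiltered (DObj FA FB cA cB f) := by
  have hne : Nonempty (DObj FA FB cA cB f) := by
    obtain ⟨i₀⟩ := (inferInstance : Nonempty I)
    obtain ⟨j₀, t₀, ht₀⟩ := exists_jt hcB hJκ hpresA i₀
    exact ⟨⟨i₀, j₀, t₀, ht₀⟩⟩
  have hobjs : ∀ d₁ d₂ : DObj FA FB cA cB f,
      ∃ (d' : DObj FA FB cA cB f) (_ : d₁ ⟶ d') (_ : d₂ ⟶ d'), True := by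
    intro d₁ d₂
    set i' := IsFiltered.max d₁.i d₂.i
    obtain ⟨j₁, t₁, ht₁, ψ₁, w₁⟩ := extendD hcB hJκ hpresA d₁ (IsFiltered.leftToMax d₁.i d₂.i)
    obtain ⟨j₂, t₂, ht₂, ψ₂, w₂⟩ := extendD hcB hJκ hpresA d₂ (IsFiltered.rightToMax d₁.i d₂.i)
    set l := IsFiltered.leftToMax j₁ j₂
    set r := IsFiltered.rightToMax j₁ j₂
    have he : (t₁ ≫ FB.map l) ≫ cB.ι.app _ = (t₂ ≫ FB.map r) ≫ cB.ι.app _ := by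
      simp only [Category.assoc, Cocone.w]
      rw [ht₁, ht₂]
    obtain ⟨j₄, m, hm⟩ := equalize_of_presentable hJκ hcB (hpresA i') _ _ he
    refine ⟨⟨i', j₄, t₁ ≫ FB.map (l ≫ m), ?_⟩,
      ⟨IsFiltered.leftToMax d₁.i d₂.i, ψ₁ ≫ l ≫ m, ?_⟩,
      ⟨IsFiltered.rightToMax d₁.i d₂.i, ψ₂ ≫ r ≫ m, ?_⟩, trivial⟩
    · rw [FB.map_comp, Category.assoc, Category.assoc, Cocone.w, Cocone.w, ht₁]
    · show FA.map _ ≫ t₁ ≫ FB.map (l ≫ m) = d₁.t ≫ FB.map (ψ₁ ≫ l ≫ m)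
      rw [FB.map_comp, ← Category.assoc, w₁]
      simp [Category.assoc]
    · show FA.map _ ≫ t₁ ≫ FB.map (l ≫ m) = d₂.t ≫ FB.map (ψ₂ ≫ r ≫ m)
      have : t₁ ≫ FB.map (l ≫ m) = t₂ ≫ FB.map (r ≫ m) := by
        rw [FB.map_comp, FB.map_comp, ← Category.assoc, ← Category.assoc, hm]
      rw [this, FB.map_comp, ← Category.assoc, w₂]
      simp [Category.assoc]
  have hmaps : ∀ (d d' : DObj FA FB cA cB f) (m m' : d ⟶ d'),
      ∃ (d'' : DObj FA FB cA cB f) (n : d' ⟶ d''), m ≫ n = m' ≫ n := by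
    intro d d' m m'
    obtain ⟨j'', t'', ht'', ψ, w⟩ :=
      extendD hcB hJκ hpresA d' (IsFiltered.coeqHom m.φ m'.φ)
    set ρ := IsFiltered.coeqHom (m.ψ ≫ ψ) (m'.ψ ≫ ψ)
    refine ⟨⟨IsFiltered.coeq m.φ m'.φ, IsFiltered.coeq (m.ψ ≫ ψ) (m'.ψ ≫ ψ),
      t'' ≫ FB.map ρ, ?_⟩, ⟨IsFiltered.coeqHom m.φ m'.φ, ψ ≫ ρ, ?_⟩, ?_⟩
    · rw [Category.assoc, Cocone.w, ht'']
    · show FA.map _ ≫ t'' ≫ FB.map ρ = d'.t ≫ FB.map (ψ ≫ ρ)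
      rw [FB.map_comp, ← Category.assoc, w, Category.assoc]
    · apply DHom.ext
      · show m.φ ≫ IsFiltered.coeqHom m.φ m'.φ = m'.φ ≫ IsFiltered.coeqHom m.φ m'.φ
        exact IsFiltered.coeq_condition _ _
      · show m.ψ ≫ ψ ≫ ρ = m'.ψ ≫ ψ ≫ ρ
        rw [← Category.assoc, ← Category.assoc]
        exact IsFiltered.coeq_condition _ _
  have : IsFilteredOrEmpty (DObj FA FB cA cB f) := ⟨hobjs, hmaps⟩
  exact { nonempty := hne }

/-- Projection to `J`. -/
@[simps, reducible]
def prJ : DObj FA FB cA cB f ⥤ J where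
  obj d := d.j
  map m := m.ψ

include hcB hJκ hpresA in
lemma finalPrJ [IsFiltered I] [Nonempty I] [IsFiltered (DObj FA FB cA cB f)] :
    Functor.Final (prJ (FA := FA) (FB := FB) (cA := cA) (cB := cB) (f := f)) := by
  apply Functor.final_of_exists_of_isFiltered
  · intro j
    obtain ⟨d₀⟩ := IsFiltered.nonempty (C := DObj FA FB cA cB f)
    refine ⟨⟨d₀.i, IsFiltered.max j d₀.j, d₀.t ≫ FB.map (IsFiltered.rightToMax j d₀.j), ?_⟩,
      ⟨IsFiltered.leftToMax j d₀.j⟩⟩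
    rw [Category.assoc, Cocone.w, d₀.ht]
  · intro j d s s'
    set ρ := IsFiltered.coeqHom s s'
    refine ⟨⟨d.i, IsFiltered.coeq s s', d.t ≫ FB.map ρ, ?_⟩, ⟨𝟙 d.i, ρ, by simp⟩, ?_⟩
    · rw [Category.assoc, Cocone.w, d.ht]
    · show s ≫ ρ = s' ≫ ρ
      exact IsFiltered.coeq_condition _ _

end

end DCat

section VCat

open CategoryTheory Limits Opposite

variable {C : Type u} [Category.{v} C] {I J : Type v} [SmallCategory I] [SmallCategory J]
  {FA : I ⥤ C} {FB : J ⥤ C} {cA : Cocone FA} {cB : Cocone FB} {f : cA.pt ⟶ cB.pt}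
  {P : C} [HasPushouts C]

attribute [local simp] pushout.inl_desc pushout.inr_desc pushout.inl_desc_assoc
  pushout.inr_desc_assoc

/-- The stagewise pushout functor. -/
@[simps, reducible]
noncomputable def Vfun (g : cA.pt ⟶ P) : DObj FA FB cA cB f ⥤ C where
  obj d := pushout d.t (cA.ι.app d.i ≫ g)
  map {d d'} m := pushout.desc (FB.map m.ψ ≫ pushout.inl _ _) (pushout.inr _ _) (by
    calc d.t ≫ FB.map m.ψ ≫ pushout.inl _ _
        = (d.t ≫ FB.map m.ψ) ≫ pushout.inl _ _ := by rw [Category.assoc]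
      _ = (FA.map m.φ ≫ d'.t) ≫ pushout.inl _ _ := by rw [m.w]
      _ = FA.map m.φ ≫ d'.t ≫ pushout.inl _ _ := by rw [Category.assoc]
      _ = FA.map m.φ ≫ (cA.ι.app d'.i ≫ g) ≫ pushout.inr _ _ := by rw [pushout.condition]
      _ = (FA.map m.φ ≫ cA.ι.app d'.i) ≫ g ≫ pushout.inr _ _ := by
          rw [Category.assoc, Category.assoc]
      _ = cA.ι.app d.i ≫ g ≫ pushout.inr _ _ := by rw [cA.w m.φ]
      _ = (cA.ι.app d.i ≫ g) ≫ pushout.inr _ _ := by rw [Category.assoc])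
  map_id d := by
    apply pushout.hom_ext <;> simp
  map_comp m n := by
    apply pushout.hom_ext <;> simp

/-- The cocone on `Vfun` over the pushout. -/
@[simps]
noncomputable def Vcocone (g : cA.pt ⟶ P) {Wpt : C} (g' : cB.pt ⟶ Wpt) (f' : P ⟶ Wpt)
    (hsq : f ≫ g' = g ≫ f') : Cocone (Vfun (f := f) g) where
  pt := Wpt
  ι :=
    { app := fun d => pushout.desc (cB.ι.app d.j ≫ g') f' (by
        rw [← Category.assoc, d.ht, Category.assoc, hsq, ← Category.assoc])
      naturality := fun d d' m => by
        apply pushout.hom_ext <;> simp }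

variable [IsFiltered J] [IsFiltered I]

noncomputable def VcoconeIsColimit (hcA : IsColimit cA) (hcB : IsColimit cB)
    (hJκ : IsKappaFiltered J Cardinal.aleph0)
    (hpresA : ∀ i : I, KPresentable Cardinal.aleph0 (FA.obj i))
    [IsFiltered (DObj FA FB cA cB f)]
    (hfin : Functor.Final (prJ (FA := FA) (FB := FB) (cA := cA) (cB := cB) (f := f)))
    (g : cA.pt ⟶ P) {Wpt : C} {g' : cB.pt ⟶ Wpt} {f' : P ⟶ Wpt}
    (hsq : IsPushout f g g' f') : IsColimit (Vcocone g g' f' hsq.w) := by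
  haveI := hfin
  have d₀ : DObj FA FB cA cB f := Classical.choice IsFiltered.nonempty
  have hwhisk : IsColimit (cB.whisker (prJ (f := f))) :=
    (Functor.Final.isColimitWhiskerEquiv (prJ (f := f)) cB).symm hcB
  -- independence of `inr ≫ s.ι.app d` of the stage `d`
  have hp : ∀ (s : Cocone (Vfun (f := f) g)) (d d' : DObj FA FB cA cB f),
      pushout.inr _ _ ≫ s.ι.app d = pushout.inr _ _ ≫ s.ι.app d' := by
    intro s d d'
    rw [← s.w (IsFiltered.leftToMax d d'), ← s.w (IsFiltered.rightToMax d d'),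
      ← Category.assoc, ← Category.assoc]
    simp
  -- the induced map out of B
  have hβ : ∀ s : Cocone (Vfun (f := f) g), ∃ β : cB.pt ⟶ s.pt,
      ∀ d : DObj FA FB cA cB f, cB.ι.app d.j ≫ β = pushout.inl _ _ ≫ s.ι.app d := by
    intro s
    refine ⟨hwhisk.desc ⟨s.pt,
      { app := fun d => pushout.inl _ _ ≫ s.ι.app d
        naturality := fun d d' m => by
          have hw := s.w m
          dsimp
          rw [Category.comp_id, ← hw, ← Category.assoc]
          simp }⟩, fun d => hwhisk.fac _ d⟩
  choose β hβ using hβ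
  have hcomm : ∀ s : Cocone (Vfun (f := f) g),
      f ≫ β s = g ≫ pushout.inr d₀.t _ ≫ s.ι.app d₀ := by
    intro s
    apply hcA.hom_ext
    intro i
    obtain ⟨j', t', ht', ψ, w⟩ := extendD hcB hJκ hpresA d₀ (IsFiltered.leftToMax d₀.i i)
    set dd : DObj FA FB cA cB f := ⟨IsFiltered.max d₀.i i, j', t', ht'⟩
    set κ : i ⟶ IsFiltered.max d₀.i i := IsFiltered.rightToMax d₀.i i
    calc cA.ι.app i ≫ f ≫ β s
        = (FA.map κ ≫ cA.ι.app dd.i) ≫ f ≫ β s := by rw [cA.w κ]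
      _ = FA.map κ ≫ (cA.ι.app dd.i ≫ f) ≫ β s := by simp only [Category.assoc]
      _ = FA.map κ ≫ (t' ≫ cB.ι.app j') ≫ β s := by rw [ht']
      _ = FA.map κ ≫ t' ≫ cB.ι.app dd.j ≫ β s := by simp only [Category.assoc]; rfl
      _ = FA.map κ ≫ t' ≫ pushout.inl _ _ ≫ s.ι.app dd := by rw [hβ s dd]
      _ = FA.map κ ≫ (dd.t ≫ pushout.inl _ _) ≫ s.ι.app dd := by simp only [Category.assoc]; rfl
      _ = FA.map κ ≫ ((cA.ι.app dd.i ≫ g) ≫ pushout.inr _ _) ≫ s.ι.app dd := by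
          rw [pushout.condition]
      _ = (FA.map κ ≫ cA.ι.app dd.i) ≫ g ≫ pushout.inr _ _ ≫ s.ι.app dd := by
          simp only [Category.assoc]
      _ = cA.ι.app i ≫ g ≫ pushout.inr _ _ ≫ s.ι.app dd := by rw [cA.w κ]
      _ = cA.ι.app i ≫ g ≫ pushout.inr _ _ ≫ s.ι.app d₀ := by rw [hp s dd d₀]
  refine ⟨fun s => hsq.desc (β s) (pushout.inr d₀.t _ ≫ s.ι.app d₀) (hcomm s), ?_, ?_⟩
  · intro s d
    apply pushout.hom_ext
    · erw [Vcocone_ι_app, ← Category.assoc, pushout.inl_desc, Category.assoc,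
        IsPushout.inl_desc, hβ s d]
    · erw [Vcocone_ι_app, ← Category.assoc, pushout.inr_desc, IsPushout.inr_desc]
      exact (hp s d₀ d)
  · intro s m hm
    apply hsq.hom_ext
    · apply hwhisk.hom_ext
      intro d
      have h1 : (cB.whisker (prJ (f := f))).ι.app d = cB.ι.app d.j := rfl
      rw [h1]
      dsimp only [Functor.const_obj_obj]
      erw [IsPushout.inl_desc, hβ s d, ← hm d, Vcocone_ι_app, ← Category.assoc,
        ← Category.assoc, pushout.inl_desc, Category.assoc]
    · erw [IsPushout.inr_desc, ← hm d₀, Vcocone_ι_app, ← Category.assoc, pushout.inr_desc]; rfl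

end VCat


/-- In a locally finitely presentable category, pure monomorphisms are stable under
pushouts. -/
theorem pure_stable_under_pushout {C : Type u} [Category.{v} C]
    (h : LocallyPresentable C Cardinal.aleph0)
    {A B P W : C} (f : A ⟶ B) (g : A ⟶ P) (f' : P ⟶ W) (g' : B ⟶ W)
    (hf : KPure Cardinal.aleph0 f) (sq : IsPushout f g g' f') :
    KPure Cardinal.aleph0 f' := by
  obtain ⟨-, hcolim, S, -, hSpres, hpres⟩ := h
  haveI : HasColimits C := hcolim
  intro P₀ Q₀ z u v hP₀ hQ₀ hsq0
  obtain ⟨I, instI, hIκ, FA, cA, hcA', hptA, hSA⟩ := hpres A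
  letI := instI
  obtain ⟨hcA⟩ := hcA'
  subst hptA
  obtain ⟨J, instJ, hJκ, FB, cB, hcB', hptB, hSB⟩ := hpres B
  letI := instJ
  obtain ⟨hcB⟩ := hcB'
  subst hptB
  haveI : IsFiltered I := isFiltered_of_isKappaFiltered hIκ
  haveI : IsFiltered J := isFiltered_of_isKappaFiltered hJκ
  haveI : Nonempty I := IsFiltered.nonempty
  have hpresA : ∀ i, KPresentable Cardinal.aleph0 (FA.obj i) := fun i => hSpres _ (hSA i)
  have hpresB : ∀ j, KPresentable Cardinal.aleph0 (FB.obj j) := fun j => hSpres _ (hSB j)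
  haveI hDfil : IsFiltered (DObj FA FB cA cB f) := isFilteredD hcB hJκ hpresA
  have hDκ : IsKappaFiltered (DObj FA FB cA cB f) Cardinal.aleph0 :=
    isKappaFiltered_of_isFiltered
  have hfin := finalPrJ (FA := FA) (FB := FB) (cA := cA) (cB := cB) (f := f) hcB hJκ hpresA
  have hVcolim := VcoconeIsColimit hcA hcB hJκ hpresA hfin g (g' := g') (f' := f') sq
  obtain ⟨d₁, v₁, hv₁⟩ := factor_of_presentable hDκ hVcolim hQ₀ v
  have he : (z ≫ v₁) ≫ (Vcocone g g' f' sq.w).ι.app d₁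
      = (u ≫ pushout.inr d₁.t (cA.ι.app d₁.i ≫ g)) ≫ (Vcocone g g' f' sq.w).ι.app d₁ := by
    erw [Category.assoc, hv₁, Category.assoc, Vcocone_ι_app, pushout.inr_desc, ← hsq0]; rfl
  obtain ⟨d₂, m, hm⟩ := equalize_of_presentable hDκ hVcolim hP₀ _ _ he
  obtain ⟨e, he2⟩ := hf d₂.t (cA.ι.app d₂.i) (cB.ι.app d₂.j) (hpresA d₂.i) (hpresB d₂.j)
    d₂.ht.symm
  have hw : d₂.t ≫ e ≫ g = (cA.ι.app d₂.i ≫ g) ≫ 𝟙 P := by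
    rw [← Category.assoc, he2, Category.comp_id]
  refine ⟨(v₁ ≫ (Vfun g).map m) ≫ pushout.desc (e ≫ g) (𝟙 P) hw, ?_⟩
  · have hinr : pushout.inr d₁.t (cA.ι.app d₁.i ≫ g) ≫ (Vfun g).map m
        = pushout.inr d₂.t (cA.ι.app d₂.i ≫ g) := by
      rw [Vfun_map, pushout.inr_desc]
    calc z ≫ (v₁ ≫ (Vfun g).map m) ≫ pushout.desc (e ≫ g) (𝟙 P) hw
        = ((z ≫ v₁) ≫ (Vfun g).map m) ≫ pushout.desc (e ≫ g) (𝟙 P) hw := by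
          simp only [Category.assoc]
      _ = ((u ≫ pushout.inr d₁.t (cA.ι.app d₁.i ≫ g)) ≫ (Vfun g).map m)
            ≫ pushout.desc (e ≫ g) (𝟙 P) hw := by rw [hm]
      _ = u ≫ (pushout.inr d₁.t (cA.ι.app d₁.i ≫ g) ≫ (Vfun g).map m)
            ≫ pushout.desc (e ≫ g) (𝟙 P) hw := by simp only [Category.assoc]
      _ = u ≫ pushout.inr d₂.t (cA.ι.app d₂.i ≫ g) ≫ pushout.desc (e ≫ g) (𝟙 P) hw := by
          rw [hinr]
      _ = u ≫ 𝟙 P := by rw [pushout.inr_desc]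
      _ = u := Category.comp_id u
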